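/- For every integer k ≥ 3, the k-dimensional hypercube Q_k satisfies Γ(Q_k) = k + 1. -/

import Mathlib

open SimpleGraph

/-- A greedy `k`-coloring of `G`: a partition of the vertex set into nonempty stable sets
`S 0, …, S (k-1)` such that for all `j < i`, every vertex of `S i` has a neighbor in `S j`. -/
def IsGreedyColoring {V : Type*} (G : SimpleGraph V) (k : ℕ) (S : Fin k → Set V) : Prop :=
  (∀ v : V, ∃! i, v ∈ S i) ∧
  (∀ i, (S i).Nonempty) ∧
  (∀ i, ∀ v ∈ S i, ∀ w ∈ S i, ¬ G.Adj v w) ∧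
  (∀ i j : Fin k, j < i → ∀ v ∈ S i, ∃ w ∈ S j, G.Adj v w)

/-- The Grundy number `Γ(G)`: the largest `k` such that `G` has a greedy `k`-coloring. -/
noncomputable def grundy {V : Type*} [Fintype V] (G : SimpleGraph V) : ℕ :=
  sSup {k | ∃ S : Fin k → Set V, IsGreedyColoring G k S}

/-- The `k`-dimensional hypercube: vertices are 0-1 vectors of length `k`, two being
adjacent iff they differ in exactly one coordinate. -/
def hypercube (k : ℕ) : SimpleGraph (Fin k → Bool) where
  Adj x y := ∃! i, x i ≠ y i
  symm := ⟨fun _ _ h => by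
    obtain ⟨i, hi, hu⟩ := h
    exact ⟨i, Ne.symm hi, fun j hj => hu j (Ne.symm hj)⟩⟩
  loopless := ⟨fun _ h => by
    obtain ⟨i, hi, -⟩ := h
    exact hi rfl⟩

/-! ### Auxiliary development for the proof -/

/-- Flip coordinate `i` of a 0-1 vector. -/
def flipv {k : ℕ} (i : Fin k) (x : Fin k → Bool) : Fin k → Bool :=
  Function.update x i (!x i)

lemma adj_iff_flip {k : ℕ} (x y : Fin k → Bool) :
    (hypercube k).Adj x y ↔ ∃ i, y = flipv i x := by
  constructor
  · rintro ⟨i, hi, hu⟩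
    refine ⟨i, funext fun j => ?_⟩
    by_cases hj : j = i
    · subst hj
      have : y j ≠ x j := Ne.symm hi
      cases hxj : x j <;> cases hyj : y j <;> simp_all [flipv]
    · have : ¬ (x j ≠ y j) := fun hne => hj (hu j hne)
      simp [flipv, Function.update_of_ne hj]
      tauto
  · rintro ⟨i, rfl⟩
    refine ⟨i, ?_, fun j hj => ?_⟩
    · simp [flipv]
    · by_contra hji
      rw [flipv, Function.update_of_ne (Ne.symm ?_)] at hj
      · exact hj rfl
      · exact fun hh => hji hh.symm

/-- A "Grundy structure" on `Q_k`: a coloring with colors `0..k`, surjective, proper,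
and such that every vertex sees all smaller colors among its neighbors. -/
def Gr (k : ℕ) (c : (Fin k → Bool) → ℕ) : Prop :=
  (∀ x, c x ≤ k) ∧ (∀ j ≤ k, ∃ x, c x = j) ∧
  (∀ x (i : Fin k), c (flipv i x) ≠ c x) ∧
  (∀ x, ∀ j < c x, ∃ i, c (flipv i x) = j)

/-- Hamming-code syndrome coloring of `Q_3`. -/
def b3 (z : Fin 3 → Bool) : ℕ :=
  (cond (xor (z 0) (z 2)) 1 0) + 2 * (cond (xor (z 1) (z 2)) 1 0)

lemma b3_le : ∀ z, b3 z ≤ 3 := by decide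
lemma b3_proper : ∀ z (i : Fin 3), b3 (flipv i z) ≠ b3 z := by decide
lemma b3_complete : ∀ z, ∀ t ≤ 3, t ≠ b3 z → ∃ i, b3 (flipv i z) = t := by decide
lemma b3_onto : ∀ t ≤ 3, ∃ z, b3 z = t := by decide

def c0 : (Fin 0 → Bool) → ℕ := fun _ => 0
lemma gr0 : Gr 0 c0 := by unfold Gr; decide

def c1 : (Fin 1 → Bool) → ℕ := fun x => cond (x 0) 1 0
lemma gr1 : Gr 1 c1 := by unfold Gr; decide

def idx5 (x : Fin 5 → Bool) : ℕ :=
  (cond (x 0) 1 0) + 2 * (cond (x 1) 1 0) + 4 * (cond (x 2) 1 0)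
    + 8 * (cond (x 3) 1 0) + 16 * (cond (x 4) 1 0)

def c5 : (Fin 5 → Bool) → ℕ := fun x =>
  [4,3,1,0,3,2,0,1,0,2,2,1,1,3,3,0,2,1,0,3,4,0,1,2,3,0,1,2,5,2,0,1].getD (idx5 x) 0

set_option maxRecDepth 10000 in
lemma gr5 : Gr 5 c5 := by unfold Gr; decide

/-- Parity of a 0-1 vector. -/
def par {m : ℕ} (y : Fin m → Bool) : ℕ := (∑ i, cond (y i) 1 0) % 2

lemma par_lt {m : ℕ} (y : Fin m → Bool) : par y < 2 := Nat.mod_lt _ (by norm_num)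

lemma par_flip_ne {m : ℕ} (y : Fin m → Bool) (i : Fin m) : par (flipv i y) ≠ par y := by
  classical
  have hfun : (fun j => cond (flipv i y j) 1 0)
      = Function.update (fun j => cond (y j) 1 0) i (cond (!y i) 1 0) := by
    funext j
    by_cases hj : j = i
    · subst hj; simp [flipv]
    · simp [flipv, Function.update_of_ne hj]
  have h1 : (∑ j, cond (flipv i y j) 1 0)
      = cond (!y i) 1 0 + ∑ j ∈ Finset.univ \ {i}, cond (y j) 1 0 := by
    rw [Finset.sum_congr rfl (fun j _ => congrFun hfun j),
      Finset.sum_update_of_mem (Finset.mem_univ i)]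
  have h2 : (∑ j, cond (y j) 1 0)
      = cond (y i) 1 0 + ∑ j ∈ Finset.univ \ {i}, cond (y j) 1 0 := by
    have := Finset.sum_update_of_mem (f := fun j => cond (y j) 1 0) (Finset.mem_univ i)
      (b := cond (y i) 1 0)
    rw [Function.update_eq_self] at this
    exact this
  unfold par
  rw [h1, h2]
  cases hyi : y i <;> simp [hyi] <;> omega

lemma par_false {m : ℕ} : par (fun _ : Fin m => false) = 0 := by simp [par]

/-! ### Splitting `Q_{3+m}` into a `Q_3` block and a `Q_m` block -/

def zp (m : ℕ) (x : Fin (3 + m) → Bool) : Fin 3 → Bool := fun i => x (Fin.castAdd m i)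
def yp (m : ℕ) (x : Fin (3 + m) → Bool) : Fin m → Bool := fun i => x (Fin.natAdd 3 i)
def glue {m : ℕ} (z : Fin 3 → Bool) (y : Fin m → Bool) : Fin (3 + m) → Bool :=
  Fin.addCases (motive := fun _ => Bool) z y

lemma zp_glue {m : ℕ} (z : Fin 3 → Bool) (y : Fin m → Bool) : zp m (glue z y) = z := by
  funext i; simp [zp, glue]

lemma yp_glue {m : ℕ} (z : Fin 3 → Bool) (y : Fin m → Bool) : yp m (glue z y) = y := by
  funext i; simp [yp, glue]

lemma cast_ne_nat {m : ℕ} (i : Fin 3) (j : Fin m) :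
    (Fin.castAdd m i) ≠ (Fin.natAdd 3 j) := by
  simp only [ne_eq, Fin.ext_iff, Fin.coe_castAdd, Fin.coe_natAdd]
  omega

lemma zp_flip_cast {m : ℕ} (x : Fin (3 + m) → Bool) (i : Fin 3) :
    zp m (flipv (Fin.castAdd m i) x) = flipv i (zp m x) := by
  funext j
  by_cases hj : j = i
  · subst hj; simp [zp, flipv]
  · have h2 : Fin.castAdd m j ≠ Fin.castAdd m i := by
      simpa [Fin.ext_iff] using fun h => hj (Fin.ext h)
    simp [zp, flipv, Function.update_of_ne hj, Function.update_of_ne h2]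

lemma yp_flip_cast {m : ℕ} (x : Fin (3 + m) → Bool) (i : Fin 3) :
    yp m (flipv (Fin.castAdd m i) x) = yp m x := by
  funext j
  have h2 : Fin.natAdd 3 j ≠ Fin.castAdd m i := (cast_ne_nat i j).symm
  simp [yp, flipv, Function.update_of_ne h2]

lemma zp_flip_nat {m : ℕ} (x : Fin (3 + m) → Bool) (i : Fin m) :
    zp m (flipv (Fin.natAdd 3 i) x) = zp m x := by
  funext j
  simp [zp, flipv, Function.update_of_ne (cast_ne_nat j i)]

lemma yp_flip_nat {m : ℕ} (x : Fin (3 + m) → Bool) (i : Fin m) :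
    yp m (flipv (Fin.natAdd 3 i) x) = flipv i (yp m x) := by
  funext j
  by_cases hj : j = i
  · subst hj; simp [yp, flipv]
  · have h2 : Fin.natAdd 3 j ≠ Fin.natAdd 3 i := by
      simp only [ne_eq, Fin.ext_iff, Fin.coe_natAdd]
      exact fun h => hj (Fin.ext (by omega))
    simp [yp, flipv, Function.update_of_ne hj, Function.update_of_ne h2]

/-- The inductive step: from a Grundy structure on `Q_m`, build one on `Q_{3+m}`. -/
def stepc (m : ℕ) (h : (Fin m → Bool) → ℕ) : (Fin (3 + m) → Bool) → ℕ := fun x =>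
  if b3 (zp m x) < 3 then (b3 (zp m x) + par (yp m x)) % 3 else h (yp m x) + 3

theorem gr_step {m : ℕ} {h : (Fin m → Bool) → ℕ} (H : Gr m h) : Gr (3 + m) (stepc m h) := by
  obtain ⟨Hb, Ho, Hp, Hc⟩ := H
  refine ⟨?_, ?_, ?_, ?_⟩
  · intro x
    unfold stepc
    have h1 := Hb (yp m x)
    split <;> omega
  · intro j hj
    by_cases hj3 : j < 3
    · obtain ⟨z, hz⟩ := b3_onto j (by omega)
      refine ⟨glue z (fun _ => false), ?_⟩
      unfold stepc
      rw [zp_glue, yp_glue, hz, par_false]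
      split <;> omega
    · obtain ⟨z, hz⟩ := b3_onto 3 le_rfl
      obtain ⟨y, hy⟩ := Ho (j - 3) (by omega)
      refine ⟨glue z y, ?_⟩
      unfold stepc
      rw [zp_glue, yp_glue, hz, hy]
      split <;> omega
  · intro x i
    induction i using Fin.addCases with
    | left i =>
      unfold stepc
      rw [zp_flip_cast, yp_flip_cast]
      have h1 := b3_proper (zp m x) i
      have h2 := b3_le (zp m x)
      have h3 := b3_le (flipv i (zp m x))
      have h4 := par_lt (yp m x)
      have h5 := Hb (yp m x)
      split <;> split <;> omega
    | right i =>
      unfold stepc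
      rw [zp_flip_nat, yp_flip_nat]
      have h1 := par_flip_ne (yp m x) i
      have h2 := par_lt (yp m x)
      have h3 := par_lt (flipv i (yp m x))
      have h4 := b3_le (zp m x)
      have h5 := Hp (yp m x) i
      split <;> omega
  · intro x j hj
    unfold stepc at hj ⊢
    have hble := b3_le (zp m x)
    have hple := par_lt (yp m x)
    by_cases hbig : b3 (zp m x) < 3
    · rw [if_pos hbig] at hj
      set p := par (yp m x) with hp
      set a := (j + 3 - p) % 3 with ha
      have ha3 : a ≤ 3 := by omega
      have hane : a ≠ b3 (zp m x) := by
        intro hcontra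
        omega
      obtain ⟨i, hi⟩ := b3_complete (zp m x) a ha3 hane
      refine ⟨Fin.castAdd m i, ?_⟩
      rw [zp_flip_cast, yp_flip_cast, hi]
      rw [if_pos (by omega)]
      omega
    · rw [if_neg hbig] at hj
      by_cases hj3 : j < 3
      · set p := par (yp m x) with hp
        set a := (j + 3 - p) % 3 with ha
        have ha3 : a ≤ 3 := by omega
        have hane : a ≠ b3 (zp m x) := by omega
        obtain ⟨i, hi⟩ := b3_complete (zp m x) a ha3 hane
        refine ⟨Fin.castAdd m i, ?_⟩
        rw [zp_flip_cast, yp_flip_cast, hi]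
        rw [if_pos (by omega)]
        omega
      · obtain ⟨i, hi⟩ := Hc (yp m x) (j - 3) (by omega)
        refine ⟨Fin.natAdd 3 i, ?_⟩
        rw [zp_flip_nat, yp_flip_nat, hi]
        rw [if_neg hbig]
        omega

/-- For every `k ≥ 3`, `Q_k` has a Grundy structure. -/
theorem exists_gr : ∀ k, 3 ≤ k → ∃ c, Gr k c := by
  intro k
  induction k using Nat.strong_induction_on with
  | _ k IH =>
    intro hk
    match k, hk with
    | 3, _ => exact ⟨stepc 0 c0, gr_step gr0⟩
    | 4, _ => exact ⟨stepc 1 c1, gr_step gr1⟩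
    | 5, _ => exact ⟨c5, gr5⟩
    | (n+6), _ =>
      obtain ⟨c, hc⟩ := IH (n + 3) (by omega) (by omega)
      have h33 : 3 + (n + 3) = n + 6 := by omega
      rw [← h33]
      exact ⟨stepc (n + 3) c, gr_step hc⟩

/-- Lower bound: a Grundy structure gives a greedy `(k+1)`-coloring. -/
lemma mem_of_gr {k : ℕ} {c : (Fin k → Bool) → ℕ} (H : Gr k c) :
    ∃ S : Fin (k+1) → Set (Fin k → Bool), IsGreedyColoring (hypercube k) (k+1) S := by
  obtain ⟨Hb, Ho, Hp, Hc⟩ := H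
  refine ⟨fun i => {x | c x = i.val}, ?_, ?_, ?_, ?_⟩
  · intro v
    have hcv := Hb v
    refine ⟨⟨c v, by omega⟩, rfl, ?_⟩
    intro j hj
    exact Fin.ext hj.symm
  · intro i
    obtain ⟨x, hx⟩ := Ho i.val (by omega)
    exact ⟨x, hx⟩
  · intro i v hv w hw hadj
    obtain ⟨l, rfl⟩ := (adj_iff_flip v w).mp hadj
    exact Hp v l (hw.trans hv.symm)
  · intro i j hij v hv
    obtain ⟨l, hl⟩ := Hc v j.val (by
      have : (j : ℕ) < (i : ℕ) := hij
      simp only [Set.mem_setOf_eq] at hv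
      omega)
    exact ⟨flipv l v, hl, (adj_iff_flip v (flipv l v)).mpr ⟨l, rfl⟩⟩

/-- Upper bound: any greedy `M`-coloring of `Q_k` has `M ≤ k+1`. -/
lemma upper_bound {k M : ℕ} (S : Fin M → Set (Fin k → Bool))
    (hS : IsGreedyColoring (hypercube k) M S) : M ≤ k + 1 := by
  rcases Nat.eq_zero_or_pos M with h0 | hM
  · omega
  obtain ⟨part, hne, _, dom⟩ := hS
  set top : Fin M := ⟨M - 1, by omega⟩ with htop
  obtain ⟨v, hv⟩ := hne top
  have key : ∀ j : Fin (M - 1), ∃ w, w ∈ S ⟨j.val, by omega⟩ ∧ (hypercube k).Adj v w := by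
    intro j
    have hlt : (⟨j.val, by omega⟩ : Fin M) < top := by
      simp only [Fin.lt_def, htop]
      omega
    obtain ⟨w, hw, hadj⟩ := dom top ⟨j.val, by omega⟩ hlt v hv
    exact ⟨w, hw, hadj⟩
  choose w hw hadj using key
  have key2 : ∀ j : Fin (M - 1), ∃ i : Fin k, w j = flipv i v := by
    intro j
    exact (adj_iff_flip v (w j)).mp (hadj j)
  choose F hF using key2
  have Finj : Function.Injective F := by
    intro j j' hjj
    have hww : w j = w j' := by rw [hF j, hF j', hjj]
    have h1 := hw j
    have h2 := hw j'
    rw [hww] at h1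
    obtain ⟨i0, -, huniq⟩ := part (w j')
    have e1 := huniq _ h1
    have e2 := huniq _ h2
    have : (⟨j.val, by omega⟩ : Fin M) = ⟨j'.val, by omega⟩ := e1.trans e2.symm
    exact Fin.ext (by simpa [Fin.ext_iff] using this)
  have hcard := Fintype.card_le_of_injective F Finj
  simp only [Fintype.card_fin] at hcard
  omega

/-- For every `k ≥ 3`, the `k`-dimensional hypercube satisfies `Γ(Q_k) = k + 1`. -/
theorem grundy_hypercube (k : ℕ) (hk : 3 ≤ k) :
    grundy (hypercube k) = k + 1 := by
  obtain ⟨c, hc⟩ := exists_gr k hk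
  have hmem : (k + 1) ∈ {M | ∃ S : Fin M → Set (Fin k → Bool),
      IsGreedyColoring (hypercube k) M S} := mem_of_gr hc
  have hub : ∀ M ∈ {M | ∃ S : Fin M → Set (Fin k → Bool),
      IsGreedyColoring (hypercube k) M S}, M ≤ k + 1 := by
    rintro M ⟨S, hS⟩
    exact upper_bound S hS
  unfold grundy
  refine le_antisymm (csSup_le ⟨k + 1, hmem⟩ hub) (le_csSup ⟨k + 1, hub⟩ hmem)
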